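/- Let F_q be a finite field of odd characteristic and let α ∈ F_q with α ≠ 0 and α² ≠ 1. Define polynomials a(x) = 2αx − α² − 1, b(x) = 2αx² + (−3α² − 1)x + α³ + α, c(x) = (−α² − 1)x² + (α³ + α)x − α⁴/4 − α²/2 + 3/4, and Δ(x) = b(x)² − 4a(x)c(x) in F_q[x]. Assume there exists x1 ∈ F_q such that (i) 1 − x1² is a nonzero square in F_q, (ii) a(x1) ≠ 0, and (iii) Δ(x1) is a nonzero square in F_q. Then there exist x2, x3, y1, y2, y3 ∈ F_q such that x1 + x2 + x3 = α, y1 + y2 + y3 = 0, x1² + y1² = 1, x2² + y2² = 1, and x3² + y3² = 1. -/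

import Mathlib

lemma circle_pair_aux (F : Type*) [Field F] (s t m v : F)
    (ht : t ≠ 0) (hm : m ≠ 0) (h2 : (2 : F) ≠ 0)
    (hmst : m = s ^ 2 + t ^ 2) (hv : v ^ 2 = t ^ 2 * m * (4 - m)) :
    ∃ x2 x3 y2 y3 : F, x2 + x3 = s ∧ y2 + y3 = t ∧
      x2 ^ 2 + y2 ^ 2 = 1 ∧ x3 ^ 2 + y3 ^ 2 = 1 := by
  set x2 : F := (s * m + v) / (2 * m) with hx2
  set y2 : F := (m - 2 * s * x2) / (2 * t) with hy2
  have hx2' : 2 * m * x2 = s * m + v := by rw [hx2]; field_simp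
  have hy2' : 2 * t * y2 = m - 2 * s * x2 := by rw [hy2]; field_simp
  have hE : 4 * t ^ 2 * m * (x2 ^ 2 + y2 ^ 2) = 4 * t ^ 2 * m * 1 := by
    linear_combination m * (2 * t * y2 + m - 2 * s * x2) * hy2'
      + (2 * m * x2 + s * m + v - 2 * s * m) * hx2' + hv
      + (-4 * m * x2 ^ 2 + 4 * m - m * (4 - m)) * hmst
  have hne : (4 : F) * t ^ 2 * m ≠ 0 := by
    have h4 : (4 : F) ≠ 0 := by
      have : (4 : F) = 2 * 2 := by norm_num
      rw [this]; exact mul_ne_zero h2 h2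
    exact mul_ne_zero (mul_ne_zero h4 (pow_ne_zero 2 ht)) hm
  have hcirc : x2 ^ 2 + y2 ^ 2 = 1 := mul_left_cancel₀ hne hE
  refine ⟨x2, s - x2, y2, t - y2, by ring, by ring, hcirc, ?_⟩
  have hexp : (s - x2) ^ 2 + (t - y2) ^ 2
      = s ^ 2 + t ^ 2 - (2 * s * x2 + 2 * t * y2) + (x2 ^ 2 + y2 ^ 2) := by ring
  rw [hexp, hcirc, ← hmst]
  have : 2 * s * x2 + 2 * t * y2 = m := by linear_combination hy2'
  rw [this]; ring

/-- Finite field of odd characteristic, `α ≠ 0`, `α² ≠ 1`. With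
`a(x) = 2αx − α² − 1`, `b(x) = 2αx² + (−3α² − 1)x + α³ + α`,
`c(x) = (−α² − 1)x² + (α³ + α)x − α⁴/4 − α²/2 + 3/4` and `Δ = b² − 4ac`:
if there is `x1` with `1 − x1²` a nonzero square, `a(x1) ≠ 0` and `Δ(x1)` a
nonzero square, then the system of the even case is solvable. -/
theorem system_even_solvable_of_discriminant (F : Type*) [Field F] [Fintype F]
    (hchar : ringChar F ≠ 2) (α : F) (hα : α ≠ 0) (hα1 : α ^ 2 ≠ 1)
    (x1 : F)
    (h1 : 1 - x1 ^ 2 ≠ 0 ∧ ∃ w : F, 1 - x1 ^ 2 = w ^ 2)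
    (h2 : 2 * α * x1 - α ^ 2 - 1 ≠ 0)
    (h3 : (2 * α * x1 ^ 2 + (-3 * α ^ 2 - 1) * x1 + α ^ 3 + α) ^ 2 -
        4 * (2 * α * x1 - α ^ 2 - 1) *
          ((-α ^ 2 - 1) * x1 ^ 2 + (α ^ 3 + α) * x1
            - α ^ 4 / 4 - α ^ 2 / 2 + 3 / 4) ≠ 0 ∧
      ∃ w : F, (2 * α * x1 ^ 2 + (-3 * α ^ 2 - 1) * x1 + α ^ 3 + α) ^ 2 -
        4 * (2 * α * x1 - α ^ 2 - 1) *
          ((-α ^ 2 - 1) * x1 ^ 2 + (α ^ 3 + α) * x1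
            - α ^ 4 / 4 - α ^ 2 / 2 + 3 / 4) = w ^ 2) :
    ∃ x2 x3 y1 y2 y3 : F,
      x1 + x2 + x3 = α ∧ y1 + y2 + y3 = 0 ∧
      x1 ^ 2 + y1 ^ 2 = 1 ∧ x2 ^ 2 + y2 ^ 2 = 1 ∧ x3 ^ 2 + y3 ^ 2 = 1 := by
  obtain ⟨hne1, w, hw⟩ := h1
  obtain ⟨hΔne, v, hv⟩ := h3
  have h2' : (2 : F) ≠ 0 := by
    intro h
    exact hchar (CharP.ringChar_of_prime_eq_zero Nat.prime_two h)
  have hwne : w ≠ 0 := by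
    intro h; rw [h] at hw; simp at hw; exact hne1 (by linear_combination hw)
  set s : F := α - x1 with hs
  set t : F := -w with hts
  set m : F := -(2 * α * x1 - α ^ 2 - 1) with hms
  have ht : t ≠ 0 := neg_ne_zero.mpr hwne
  have hm : m ≠ 0 := neg_ne_zero.mpr h2
  have hmst : m = s ^ 2 + t ^ 2 := by rw [hs, hts, hms]; linear_combination hw
  have h4 : (4 : F) ≠ 0 := by
    have : (4 : F) = 2 * 2 := by norm_num
    rw [this]; exact mul_ne_zero h2' h2'
  have h32 : (32 : F) ≠ 0 := by
    have : (32 : F) = 2 ^ 5 := by norm_num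
    rw [this]; exact pow_ne_zero 5 h2'
  have hv' : v ^ 2 = t ^ 2 * m * (4 - m) := by
    rw [hts, hms]
    field_simp [h4, h2'] at hv
    refine mul_right_cancel₀ h32 ?_
    linear_combination -16 * hv + 32 * (-(2 * α * x1 - α ^ 2 - 1)) *
      (4 + (2 * α * x1 - α ^ 2 - 1)) * hw
  obtain ⟨x2, x3, y2, y3, hsum, htsum, hc2, hc3⟩ :=
    circle_pair_aux F s t m v ht hm h2' hmst hv'
  refine ⟨x2, x3, w, y2, y3, ?_, ?_, ?_, hc2, hc3⟩
  · rw [hs] at hsum; linear_combination hsum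
  · rw [hts] at htsum; linear_combination htsum
  · linear_combination -hw
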